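/- arXiv:2510.21560 — 4 statements merged into one kernel-verified Lean document; each statement's English description precedes it below -/
import Mathlib

section
/- Let B : ℝ^n → ℝ be continuously differentiable, let α : ℝ → ℝ be an extended class-K∞ function, and let x : ℝ → ℝ^n be a differentiable curve whose derivative at each time t ≥ 0 is x'(t). Suppose that for every t ≥ 0 the directional derivative of B along the trajectory satisfies (dB(x(t)))(x'(t)) ≥ -α(B(x(t))). If B(x(0)) ≥ 0, then B(x(t)) ≥ 0 for all t ≥ 0; that is, the zero-superlevel set {x : B(x) ≥ 0} is forward invariant along the trajectory. -/
/-- Forward invariance of the zero-superlevel set of a continuously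
differentiable barrier function `B` along a trajectory satisfying the CBF inequality
with an extended class-K∞ comparison function `α`. -/
theorem cbf_forward_invariance {n : ℕ}
    (B : EuclideanSpace ℝ (Fin n) → ℝ) (hB : ContDiff ℝ 1 B)
    (α : ℝ → ℝ) (hα_cont : Continuous α) (hα_mono : StrictMono α) (hα_zero : α 0 = 0)
    (x x' : ℝ → EuclideanSpace ℝ (Fin n))
    (hx : ∀ t : ℝ, 0 ≤ t → HasDerivAt x (x' t) t)
    (hineq : ∀ t : ℝ, 0 ≤ t → fderiv ℝ B (x t) (x' t) ≥ -α (B (x t)))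
    (h0 : B (x 0) ≥ 0) :
    ∀ t : ℝ, 0 ≤ t → B (x t) ≥ 0 := by
  intro T hT
  by_contra hneg
  push_neg at hneg
  set f : ℝ → ℝ := fun t => B (x t) with hf
  have hBdiff : Differentiable ℝ B := hB.differentiable one_ne_zero
  have hderiv : ∀ t : ℝ, 0 ≤ t → HasDerivAt f (fderiv ℝ B (x t) (x' t)) t := by
    intro t ht
    exact (hBdiff (x t)).hasFDerivAt.comp_hasDerivAt t (hx t ht)
  have hcont : ∀ t : ℝ, 0 ≤ t → ContinuousAt f t := fun t ht => (hderiv t ht).continuousAt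
  set S : Set ℝ := {t | t ∈ Set.Icc (0:ℝ) T ∧ 0 ≤ f t} with hS
  have h0S : (0:ℝ) ∈ S := ⟨⟨le_rfl, hT⟩, h0⟩
  have hSne : S.Nonempty := ⟨0, h0S⟩
  have hbdd : BddAbove S := ⟨T, fun t ht => ht.1.2⟩
  set s := sSup S with hs
  have hs0 : 0 ≤ s := le_csSup hbdd h0S
  have hsT : s ≤ T := csSup_le hSne fun t ht => ht.1.2
  have hclos : s ∈ closure S := csSup_mem_closure hSne hbdd
  have hfs : 0 ≤ f s := by
    have hne : (nhdsWithin s S).NeBot := mem_closure_iff_nhdsWithin_neBot.mp hclos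
    exact ge_of_tendsto ((hcont s hs0).continuousWithinAt)
      (Filter.eventually_of_mem self_mem_nhdsWithin fun t (ht : t ∈ S) => ht.2)
  have hslt : s < T := by
    rcases lt_or_eq_of_le hsT with h | h
    · exact h
    · exact absurd hfs (by rw [h]; exact not_le.mpr hneg)
  have hnegOn : ∀ t : ℝ, t ∈ Set.Ioc s T → f t < 0 := by
    intro t ht
    by_contra hge
    push_neg at hge
    have : t ∈ S := ⟨⟨hs0.trans ht.1.le, ht.2⟩, hge⟩
    exact absurd (le_csSup hbdd this) (not_le.mpr ht.1)
  have hmono : StrictMonoOn f (Set.Icc s T) := by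
    apply strictMonoOn_of_deriv_pos (convex_Icc s T)
    · intro t ht
      exact (hcont t (hs0.trans ht.1)).continuousWithinAt
    · intro t ht
      rw [interior_Icc] at ht
      have ht0 : 0 ≤ t := hs0.trans ht.1.le
      rw [(hderiv t ht0).deriv]
      have hft : f t < 0 := hnegOn t ⟨ht.1, ht.2.le⟩
      have : α (f t) < 0 := by
        have := hα_mono hft
        rwa [hα_zero] at this
      linarith [hineq t ht0]
  have := hmono (Set.left_mem_Icc.mpr hsT) (Set.right_mem_Icc.mpr hsT) hslt
  linarith
end

section
/- Let α : ℝ → ℝ be an extended class-K∞ function and let y : ℝ → ℝ be differentiable with y'(t) ≥ -α(y(t)) for all t ≥ 0. If y(0) ≥ 0, then y(t) ≥ 0 for all t ≥ 0. -/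
/-- Scalar comparison lemma: if `y` is differentiable with
`y'(t) ≥ -α (y t)` for all `t ≥ 0`, where `α` is an extended class-K∞ function,
and `y 0 ≥ 0`, then `y t ≥ 0` for all `t ≥ 0`. -/
theorem scalar_comparison_classK
    (α : ℝ → ℝ) (hα_cont : Continuous α) (hα_mono : StrictMono α) (hα_zero : α 0 = 0)
    (y : ℝ → ℝ) (hy : Differentiable ℝ y)
    (hineq : ∀ t : ℝ, 0 ≤ t → deriv y t ≥ -α (y t))
    (h0 : y 0 ≥ 0) :
    ∀ t : ℝ, 0 ≤ t → y t ≥ 0 := by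
  intro t₀ ht₀
  by_contra hneg
  push_neg at hneg
  set S : Set ℝ := {t | t ∈ Set.Icc (0:ℝ) t₀ ∧ 0 ≤ y t} with hS
  have hSclosed : IsClosed S := by
    have : S = Set.Icc (0:ℝ) t₀ ∩ y ⁻¹' Set.Ici 0 := by
      ext x; simp [hS, Set.mem_Icc, and_assoc]
    rw [this]
    exact isClosed_Icc.inter (isClosed_Ici.preimage hy.continuous)
  have hSne : S.Nonempty := ⟨0, ⟨le_refl 0, ht₀⟩, h0⟩
  have hSbdd : BddAbove S := ⟨t₀, fun x hx => hx.1.2⟩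
  set s := sSup S with hs
  have hsS : s ∈ S := hSclosed.csSup_mem hSne hSbdd
  have hs0 : 0 ≤ s := hsS.1.1
  have hst₀ : s ≤ t₀ := hsS.1.2
  have hys : 0 ≤ y s := hsS.2
  have hslt : s < t₀ := lt_of_le_of_ne hst₀ (fun h => absurd hys (by rw [h]; linarith))
  -- on (s, t₀], y < 0
  have hneg' : ∀ x, s < x → x ≤ t₀ → y x < 0 := by
    intro x hx hx'
    by_contra h
    push_neg at h
    have : x ∈ S := ⟨⟨le_trans hs0 hx.le, hx'⟩, h⟩
    exact absurd (le_csSup hSbdd this) (not_le.mpr hx)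
  have hmono : StrictMonoOn y (Set.Icc s t₀) := by
    apply strictMonoOn_of_deriv_pos (convex_Icc s t₀) (hy.continuous.continuousOn)
    intro x hx
    rw [interior_Icc] at hx
    have hyx : y x < 0 := hneg' x hx.1 hx.2.le
    have hαx : α (y x) < 0 := by
      have := hα_mono hyx
      rwa [hα_zero] at this
    have := hineq x (le_trans hs0 hx.1.le)
    linarith
  have := hmono ⟨le_refl s, hst₀⟩ ⟨hst₀, le_refl t₀⟩ hslt
  linarith
end

section
/- Let r > 0, let α : ℝ → ℝ be an extended class-K∞ function, and let x : ℝ → ℝ² be a differentiable curve in the Euclidean plane with derivative u(t) = x'(t) (the single-integrator system ẋ = u). Suppose ‖x(0)‖² ≥ r², and that for every t ≥ 0 the control satisfies the CBF inequality 2⟪x(t), u(t)⟫ ≥ -α(‖x(t)‖² - r²). Then ‖x(t)‖ ≥ r for all t ≥ 0; i.e., the trajectory never enters the open disk of radius r centered at the origin. -/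
open scoped RealInnerProductSpace

/-- Single-integrator obstacle avoidance: with `B(x) = ‖x‖² - r²`
as barrier function, if the CBF inequality `2⟪x t, u t⟫ ≥ -α (‖x t‖² - r²)` holds
along the trajectory `ẋ = u` and `‖x 0‖² ≥ r²`, then `‖x t‖ ≥ r` for all `t ≥ 0`. -/
theorem single_integrator_obstacle_avoidance (r : ℝ) (hr : 0 < r)
    (α : ℝ → ℝ) (hα_cont : Continuous α) (hα_mono : StrictMono α) (hα_zero : α 0 = 0)
    (x u : ℝ → EuclideanSpace ℝ (Fin 2))
    (hx : ∀ t : ℝ, 0 ≤ t → HasDerivAt x (u t) t)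
    (h0 : ‖x 0‖ ^ 2 ≥ r ^ 2)
    (hineq : ∀ t : ℝ, 0 ≤ t → 2 * ⟪x t, u t⟫ ≥ -α (‖x t‖ ^ 2 - r ^ 2)) :
    ∀ t : ℝ, 0 ≤ t → ‖x t‖ ≥ r := by
  set B : ℝ → ℝ := fun t => ‖x t‖ ^ 2 - r ^ 2 with hB
  have hBderiv : ∀ t : ℝ, 0 ≤ t → HasDerivAt B (2 * ⟪x t, u t⟫) t := by
    intro t ht
    have h := hx t ht
    have h2 := ((h.inner ℝ h).sub_const (r ^ 2))
    have heq : ⟪x t, u t⟫ + ⟪u t, x t⟫ = 2 * ⟪x t, u t⟫ := by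
      rw [real_inner_comm (u t)]; ring
    simp only [real_inner_self_eq_norm_sq] at h2
    rwa [heq] at h2
  have hBcont : ∀ t : ℝ, 0 ≤ t → ContinuousAt B t := fun t ht =>
    (hBderiv t ht).continuousAt
  -- main claim: B t ≥ 0 for all t ≥ 0
  have key : ∀ t : ℝ, 0 ≤ t → 0 ≤ B t := by
    intro t₁ ht₁
    by_contra hneg
    push_neg at hneg
    set S : Set ℝ := {t | t ∈ Set.Icc 0 t₁ ∧ 0 ≤ B t} with hS
    have hB0 : 0 ≤ B 0 := by simpa [hB] using sub_nonneg.mpr h0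
    have hne : S.Nonempty := ⟨0, ⟨le_refl 0, ht₁⟩, hB0⟩
    have hBconOn : ContinuousOn B (Set.Icc 0 t₁) := fun s hs =>
      (hBcont s hs.1).continuousWithinAt
    have hSclosed : IsClosed S := by
      have : S = Set.Icc 0 t₁ ∩ B ⁻¹' Set.Ici 0 := by
        ext s; simp only [hS, Set.mem_inter_iff, Set.mem_setOf_eq, Set.mem_preimage,
          Set.mem_Ici]
      rw [this]
      exact (hBconOn.preimage_isClosed_of_isClosed isClosed_Icc isClosed_Ici)
    have hScompact : IsCompact S := (isCompact_Icc (a := (0:ℝ)) (b := t₁)).of_isClosed_subset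
      hSclosed (fun s hs => hs.1)
    obtain ⟨s, hsS, hsmax⟩ := hScompact.exists_isGreatest hne
    obtain ⟨⟨hs0, hst₁⟩, hBs⟩ := hsS
    have hslt : s < t₁ := lt_of_le_of_ne hst₁ (by
      rintro rfl; exact absurd hBs (not_le.mpr hneg))
    have hBneg : ∀ t, s < t → t ≤ t₁ → B t < 0 := by
      intro t hst htt₁
      by_contra h
      push_neg at h
      exact absurd (hsmax ⟨⟨hs0.trans (le_of_lt hst), htt₁⟩, h⟩) (not_le.mpr hst)
    -- B strictly increasing on [s, t₁]
    have hmono : StrictMonoOn B (Set.Icc s t₁) := by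
      apply strictMonoOn_of_deriv_pos (convex_Icc s t₁)
      · exact hBconOn.mono (Set.Icc_subset_Icc hs0 le_rfl)
      · intro t ht
        rw [interior_Icc] at ht
        have ht0 : (0:ℝ) ≤ t := hs0.trans ht.1.le
        have hd := hBderiv t ht0
        rw [hd.deriv]
        have hBt : B t < 0 := hBneg t ht.1 ht.2.le
        have : α (B t) < 0 := hα_zero ▸ hα_mono hBt
        have := hineq t ht0
        have h3 : α (‖x t‖ ^ 2 - r ^ 2) < 0 := by have h4 := hα_mono hBt; rw [hα_zero] at h4; exact h4
        linarith
    have := hmono ⟨le_rfl, hst₁⟩ ⟨hst₁, le_rfl⟩ hslt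
    linarith
  intro t ht
  have := key t ht
  have h2 : r ^ 2 ≤ ‖x t‖ ^ 2 := by simpa [hB] using this
  exact le_of_pow_le_pow_left₀ two_ne_zero (norm_nonneg _) h2
end

section
/- Let B : ℝ^n → ℝ be continuously differentiable, let α : ℝ → ℝ be an extended class-K∞ function, let Fail ⊆ ℝ^n be a set disjoint from the zero-superlevel set {x : B(x) ≥ 0}, and let x : ℝ → ℝ^n be a differentiable trajectory with B(x(0)) ≥ 0 such that for every t ≥ 0, (dB(x(t)))(x'(t)) ≥ -α(B(x(t))). Then x(t) ∉ Fail for all t ≥ 0. -/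
/-- Safety of the CBF filter: if the failure set is disjoint from the
zero-superlevel set `{x : B x ≥ 0}` and a trajectory starting in that set satisfies
the CBF inequality, then the trajectory never enters the failure set. -/
theorem cbf_safety_filter {n : ℕ}
    (B : EuclideanSpace ℝ (Fin n) → ℝ) (hB : ContDiff ℝ 1 B)
    (α : ℝ → ℝ) (hα_cont : Continuous α) (hα_mono : StrictMono α) (hα_zero : α 0 = 0)
    (Fail : Set (EuclideanSpace ℝ (Fin n)))
    (hFail : Disjoint Fail {x : EuclideanSpace ℝ (Fin n) | B x ≥ 0})
    (x x' : ℝ → EuclideanSpace ℝ (Fin n))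
    (hx : ∀ t : ℝ, 0 ≤ t → HasDerivAt x (x' t) t)
    (h0 : B (x 0) ≥ 0)
    (hineq : ∀ t : ℝ, 0 ≤ t → fderiv ℝ B (x t) (x' t) ≥ -α (B (x t))) :
    ∀ t : ℝ, 0 ≤ t → x t ∉ Fail := by
  -- derivative of g := B ∘ x
  have hg : ∀ t : ℝ, 0 ≤ t →
      HasDerivAt (fun s => B (x s)) (fderiv ℝ B (x t) (x' t)) t := by
    intro t ht
    exact ((hB.differentiable one_ne_zero (x t)).hasFDerivAt).comp_hasDerivAt t (hx t ht)
  -- main claim: B (x t) ≥ 0 for all t ≥ 0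
  have key : ∀ t : ℝ, 0 ≤ t → 0 ≤ B (x t) := by
    intro t1 ht1
    by_contra hneg
    push_neg at hneg
    set g : ℝ → ℝ := fun s => B (x s) with hgdef
    have hgcont : ContinuousOn g (Set.Icc 0 t1) := by
      intro s hs
      exact ((hg s hs.1).continuousAt).continuousWithinAt
    set S : Set ℝ := Set.Icc 0 t1 ∩ g ⁻¹' Set.Ici 0 with hSdef
    have hS0 : (0 : ℝ) ∈ S := ⟨⟨le_refl 0, ht1⟩, h0⟩
    have hSne : S.Nonempty := ⟨0, hS0⟩
    have hSbdd : BddAbove S := ⟨t1, fun s hs => hs.1.2⟩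
    have hSclosed : IsClosed S :=
      ContinuousOn.preimage_isClosed_of_isClosed hgcont isClosed_Icc isClosed_Ici
    have ht0S : sSup S ∈ S := hSclosed.csSup_mem hSne hSbdd
    set t0 := sSup S with ht0def
    have ht0le : t0 ≤ t1 := ht0S.1.2
    have ht00 : 0 ≤ t0 := ht0S.1.1
    have hgt0 : 0 ≤ g t0 := ht0S.2
    have ht0lt : t0 < t1 := lt_of_le_of_ne ht0le (by
      intro h
      rw [h] at hgt0
      exact absurd hneg (not_lt.mpr hgt0))
    -- g < 0 on (t0, t1]
    have hgneg : ∀ s, t0 < s → s ≤ t1 → g s < 0 := by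
      intro s hs1 hs2
      by_contra h
      push_neg at h
      have : s ∈ S := ⟨⟨le_trans ht00 (le_of_lt hs1), hs2⟩, h⟩
      exact absurd (le_csSup hSbdd this) (not_le.mpr hs1)
    -- deriv g > 0 on the interior (t0, t1)
    have hderiv_pos : ∀ s ∈ interior (Set.Icc t0 t1), 0 < deriv g s := by
      intro s hs
      rw [interior_Icc] at hs
      have hs0 : (0:ℝ) ≤ s := le_trans ht00 (le_of_lt hs.1)
      have hd := hg s hs0
      rw [hd.deriv]
      have hgs : g s < 0 := hgneg s hs.1 (le_of_lt hs.2)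
      have : α (g s) < 0 := by
        have := hα_mono hgs
        rwa [hα_zero] at this
      calc (0:ℝ) < -α (g s) := by linarith
        _ ≤ fderiv ℝ B (x s) (x' s) := hineq s hs0
    have hmono : StrictMonoOn g (Set.Icc t0 t1) := by
      apply StrictMonoOn.mono (s := Set.Icc t0 t1) ?_ (le_refl _)
      exact strictMonoOn_of_deriv_pos (convex_Icc t0 t1)
        (hgcont.mono (Set.Icc_subset_Icc ht00 le_rfl)) hderiv_pos
    have : g t0 < g t1 :=
      hmono (Set.left_mem_Icc.mpr ht0le) (Set.right_mem_Icc.mpr ht0le) ht0lt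
    linarith [hgneg t1 ht0lt le_rfl]
  intro t ht hmem
  exact Set.disjoint_left.mp hFail hmem (key t ht)
end
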